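/- Let G be a graph of order n ≥ 3 with no isolated vertices. Then γ_tR(G) = 4 if and only if either G is the disjoint union of two copies of K_2, or Δ(G) ≤ n − 2 and there exist adjacent vertices u and v with N[u] ∪ N[v] = V(G). -/

import Mathlib

open Finset

/-- A graph has no isolated vertices. -/
def SimpleGraph.IsolateFree {V : Type*} (G : SimpleGraph V) : Prop :=
  ∀ v, ∃ u, G.Adj v u

/-- A Roman dominating function. -/
def SimpleGraph.IsRDF {V : Type*} (G : SimpleGraph V) (f : V → Fin 3) : Prop :=
  ∀ v, f v = 0 → ∃ u, G.Adj v u ∧ f u = 2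

/-- A total Roman dominating function. -/
def SimpleGraph.IsTRDF {V : Type*} (G : SimpleGraph V) (f : V → Fin 3) : Prop :=
  (∀ v, f v = 0 → ∃ u, G.Adj v u ∧ f u = 2) ∧
  (∀ v, f v ≠ 0 → ∃ u, G.Adj v u ∧ f u ≠ 0)

/-- The Roman domination number. -/
noncomputable def SimpleGraph.rdn {V : Type*} [Fintype V] (G : SimpleGraph V) : ℕ :=
  sInf {w | ∃ f : V → Fin 3, G.IsRDF f ∧ w = ∑ v, (f v : ℕ)}

/-- The total Roman domination number. -/
noncomputable def SimpleGraph.trdn {V : Type*} [Fintype V] (G : SimpleGraph V) : ℕ :=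
  sInf {w | ∃ f : V → Fin 3, G.IsTRDF f ∧ w = ∑ v, (f v : ℕ)}

/-- A total dominating set. -/
def SimpleGraph.IsTDS {V : Type*} (G : SimpleGraph V) (S : Finset V) : Prop :=
  ∀ v, ∃ u ∈ S, G.Adj v u

/-- A dominating set. -/
def SimpleGraph.IsDS {V : Type*} (G : SimpleGraph V) (S : Finset V) : Prop :=
  ∀ v, v ∈ S ∨ ∃ u ∈ S, G.Adj v u

/-- The total domination number. -/
noncomputable def SimpleGraph.tdn {V : Type*} [Fintype V] (G : SimpleGraph V) : ℕ :=
  sInf {n | ∃ S : Finset V, G.IsTDS S ∧ n = S.card}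

/-- The domination number. -/
noncomputable def SimpleGraph.dn {V : Type*} [Fintype V] (G : SimpleGraph V) : ℕ :=
  sInf {n | ∃ S : Finset V, G.IsDS S ∧ n = S.card}

/-- The total Roman bondage number, in ℕ∞ (∞ if no valid edge set exists). -/
noncomputable def SimpleGraph.btR {V : Type*} [Fintype V] (G : SimpleGraph V) : ℕ∞ :=
  sInf {n : ℕ∞ | ∃ E' : Finset (Sym2 V), ↑E' ⊆ G.edgeSet ∧
    (G.deleteEdges ↑E').IsolateFree ∧ G.trdn < (G.deleteEdges ↑E').trdn ∧ n = E'.card}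

/-- The total bondage number, in ℕ∞. -/
noncomputable def SimpleGraph.bt {V : Type*} [Fintype V] (G : SimpleGraph V) : ℕ∞ :=
  sInf {n : ℕ∞ | ∃ E' : Finset (Sym2 V), ↑E' ⊆ G.edgeSet ∧
    (G.deleteEdges ↑E').IsolateFree ∧ G.tdn < (G.deleteEdges ↑E').tdn ∧ n = E'.card}

/-- The bondage number, in ℕ∞. -/
noncomputable def SimpleGraph.bond {V : Type*} [Fintype V] (G : SimpleGraph V) : ℕ∞ :=
  sInf {n : ℕ∞ | ∃ E' : Finset (Sym2 V), ↑E' ⊆ G.edgeSet ∧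
    G.dn < (G.deleteEdges ↑E').dn ∧ n = E'.card}

/-- The vertex cover number. -/
noncomputable def SimpleGraph.vcn {V : Type*} [Fintype V] (G : SimpleGraph V) : ℕ :=
  sInf {n | ∃ S : Finset V, (∀ u v, G.Adj u v → u ∈ S ∨ v ∈ S) ∧ n = S.card}

/-- The S-external private neighborhood of v. -/
def SimpleGraph.epn {V : Type*} (G : SimpleGraph V) (v : V) (S : Set V) : Set V :=
  {w | w ∉ S ∧ G.Adj w v ∧ ∀ x ∈ S, G.Adj w x → x = v}

set_option linter.unusedSectionVars false
set_option maxHeartbeats 1000000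

section helpers
variable {V : Type*} [Fintype V] [DecidableEq V] {G : SimpleGraph V} [DecidableRel G.Adj]

private lemma fin3_eq (x : Fin 3) : x = 0 ∨ x = 1 ∨ x = 2 := by revert x; decide

private lemma fin3_val0 : ((0 : Fin 3) : ℕ) = 0 := rfl
private lemma fin3_val1 : ((1 : Fin 3) : ℕ) = 1 := rfl
private lemma fin3_val2 : ((2 : Fin 3) : ℕ) = 2 := rfl

private lemma trdnSet_nonempty (hG : G.IsolateFree) :
    {w | ∃ f : V → Fin 3, G.IsTRDF f ∧ w = ∑ v, (f v : ℕ)}.Nonempty := by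
  refine ⟨∑ v : V, ((2 : Fin 3) : ℕ), fun _ => 2, ⟨?_, ?_⟩, rfl⟩
  · intro v hv; exact absurd hv (show ¬((2:Fin 3) = 0) by decide)
  · intro v _
    obtain ⟨u, hu⟩ := hG v
    exact ⟨u, hu, show (2:Fin 3) ≠ 0 by decide⟩

private lemma sum_count (f : V → Fin 3) :
    ∑ v, (f v : ℕ) = 2 * (univ.filter fun v => f v = 2).card + (univ.filter fun v => f v = 1).card := by
  rw [Finset.card_filter, Finset.card_filter, Finset.mul_sum, ← Finset.sum_add_distrib]
  refine Finset.sum_congr rfl fun v _ => ?_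
  rcases fin3_eq (f v) with h | h | h <;> simp [h]

private lemma sum_pair_fn (u w : V) (h : u ≠ w) (a b : Fin 3) :
    ∑ v, ((if v = u then a else if v = w then b else 0 : Fin 3) : ℕ) = (a : ℕ) + (b : ℕ) := by
  rw [← Finset.sum_subset (Finset.subset_univ {u, w})]
  · rw [Finset.sum_pair h]; simp [h, h.symm, Ne.symm h]
  · intro x _ hx
    simp only [Finset.mem_insert, Finset.mem_singleton, not_or] at hx
    simp [hx.1, hx.2]

private lemma two_neighbors_degree (a x y : V) (hxy : x ≠ y) (hx : G.Adj a x) (hy : G.Adj a y) :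
    2 ≤ G.degree a := by
  have hsub : ({x, y} : Finset V) ⊆ G.neighborFinset a := by
    intro z hz
    simp only [Finset.mem_insert, Finset.mem_singleton] at hz
    rcases hz with rfl | rfl <;> simp [hx, hy]
  calc 2 = ({x, y} : Finset V).card := (Finset.card_pair hxy).symm
    _ ≤ _ := Finset.card_le_card hsub

private lemma pair_lower (hn : 3 ≤ Fintype.card V)
    (hΔ : G.maxDegree ≤ Fintype.card V - 2)
    (u v : V) (huv : G.Adj u v)
    (hcov : ∀ w : V, w ∈ G.neighborSet u ∪ {u} ∪ (G.neighborSet v ∪ {v}))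
    (f : V → Fin 3) (hf : G.IsTRDF f) : 4 ≤ ∑ x, (f x : ℕ) := by
  by_contra hlt
  push_neg at hlt
  rw [sum_count] at hlt
  set A := univ.filter fun x => f x = 2 with hA
  set B := univ.filter fun x => f x = 1 with hB
  have hmemA : ∀ x, x ∈ A ↔ f x = 2 := fun x => by simp [hA]
  have hmemB : ∀ x, x ∈ B ↔ f x = 1 := fun x => by simp [hB]
  have hAcard : A.card ≤ 1 := by omega
  rcases Nat.le_one_iff_eq_zero_or_eq_one.mp hAcard with h0 | h1
  · have hA0 : A = ∅ := Finset.card_eq_zero.mp h0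
    have hall : ∀ x, f x = 1 := by
      intro x
      rcases fin3_eq (f x) with hx | hx | hx
      · obtain ⟨z, _, hz2⟩ := hf.1 x hx
        exact absurd ((hmemA z).mpr hz2) (by simp [hA0])
      · exact hx
      · exact absurd ((hmemA x).mpr hx) (by simp [hA0])
    have hBu : B = univ := Finset.eq_univ_iff_forall.mpr fun x => (hmemB x).mpr (hall x)
    have hBcard : B.card = Fintype.card V := by rw [hBu, Finset.card_univ]
    obtain ⟨w, hw⟩ : ∃ w : V, w ∉ ({u, v} : Finset V) := by
      by_contra hc
      push_neg at hc
      have hs : (univ : Finset V) ⊆ {u, v} := fun x _ => hc x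
      have h2 : ({u, v} : Finset V).card ≤ 2 :=
        le_trans (Finset.card_insert_le _ _) (by simp)
      have := Finset.card_le_card hs
      rw [Finset.card_univ] at this
      omega
    simp only [Finset.mem_insert, Finset.mem_singleton, not_or] at hw
    have hcw := hcov w
    simp only [Set.mem_union, Set.mem_singleton_iff, SimpleGraph.mem_neighborSet] at hcw
    have hadj : G.Adj u w ∨ G.Adj v w := by tauto
    rcases hadj with h | h
    · have h2 := two_neighbors_degree u v w (by rintro rfl; exact hw.2 rfl) huv h
      have h3 := G.degree_le_maxDegree u
      omega
    · have h2 := two_neighbors_degree v u w (by rintro rfl; exact hw.1 rfl) huv.symm h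
      have h3 := G.degree_le_maxDegree v
      omega
  · obtain ⟨a, hAa⟩ := Finset.card_eq_one.mp h1
    have hfa : f a = 2 := (hmemA a).mp (by simp [hAa])
    obtain ⟨b, hab, hb0⟩ := hf.2 a (by rw [hfa]; decide)
    have hba : b ≠ a := hab.ne'
    have hfb : f b = 1 := by
      rcases fin3_eq (f b) with h | h | h
      · exact absurd h hb0
      · exact h
      · exact absurd (by simpa [hAa] using (hmemA b).mpr h) hba
    have hbB : b ∈ B := (hmemB b).mpr hfb
    have hdeg : univ.erase a ⊆ G.neighborFinset a := by
      intro z hz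
      rw [Finset.mem_erase] at hz
      rw [SimpleGraph.mem_neighborFinset]
      by_cases hzb : z = b
      · subst hzb; exact hab
      · rcases fin3_eq (f z) with h | h | h
        · obtain ⟨y, hzy, hy2⟩ := hf.1 z h
          have hya : y = a := by simpa [hAa] using (hmemA y).mpr hy2
          subst hya
          exact hzy.symm
        · exfalso
          have hzB : z ∈ B := (hmemB z).mpr h
          have hB1 : B.card ≤ 1 := by omega
          exact hzb (Finset.card_le_one.mp hB1 z hzB b hbB)
        · exact absurd (by simpa [hAa] using (hmemA z).mpr h) hz.1
    have hd1 : Fintype.card V - 1 ≤ G.degree a := by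
      have := Finset.card_le_card hdeg
      rwa [Finset.card_erase_of_mem (Finset.mem_univ a), Finset.card_univ] at this
    have := G.degree_le_maxDegree a
    omega

private lemma matching_lower (h4 : Fintype.card V = 4) (hm : ∀ v : V, ∃! u, G.Adj v u)
    (f : V → Fin 3) (hf : G.IsTRDF f) : 4 ≤ ∑ x, (f x : ℕ) := by
  classical
  set m : V → V := fun v => (hm v).choose with hmdef
  have hadj : ∀ v, G.Adj v (m v) := fun v => (hm v).choose_spec.1
  have huniq : ∀ v y, G.Adj v y → y = m v := fun v y hy => (hm v).choose_spec.2 y hy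
  have hinv : Function.Involutive m := fun v => (huniq (m v) v (hadj v).symm).symm
  have hpt : ∀ v, 2 ≤ (f v : ℕ) + (f (m v) : ℕ) := by
    intro v
    have hv3 : (f v : ℕ) < 3 := (f v).isLt
    by_cases h0 : f v = 0
    · obtain ⟨z, hz, hz2⟩ := hf.1 v h0
      have hzm : z = m v := huniq v z hz
      subst hzm
      rw [hz2, fin3_val2]
      omega
    · obtain ⟨z, hz, hz0⟩ := hf.2 v h0
      have hzm : z = m v := huniq v z hz
      subst hzm
      have h1 : 1 ≤ (f v : ℕ) := by
        rcases fin3_eq (f v) with h | h | h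
        · exact absurd h h0
        · rw [h, fin3_val1]
        · rw [h, fin3_val2]; omega
      have h2 : 1 ≤ (f (m v) : ℕ) := by
        rcases fin3_eq (f (m v)) with h | h | h
        · exact absurd h hz0
        · rw [h, fin3_val1]
        · rw [h, fin3_val2]; omega
      omega
  have hcomp : ∑ v, (f (m v) : ℕ) = ∑ v, (f v : ℕ) :=
    Fintype.sum_bijective m hinv.bijective _ _ (fun x => rfl)
  have hsum : 2 * Fintype.card V ≤ ∑ v, ((f v : ℕ) + (f (m v) : ℕ)) := by
    calc 2 * Fintype.card V = ∑ _v : V, 2 := by rw [Finset.sum_const, Finset.card_univ]; ring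
      _ ≤ _ := Finset.sum_le_sum fun v _ => hpt v
  rw [Finset.sum_add_distrib, hcomp] at hsum
  omega

end helpers

section helpers2
variable {V : Type*} [Fintype V] [DecidableEq V] {G : SimpleGraph V} [DecidableRel G.Adj]

private lemma big_degree_mem (hG : G.IsolateFree) (hn : 3 ≤ Fintype.card V)
    (hΔ : ¬ G.maxDegree ≤ Fintype.card V - 2) :
    (3 : ℕ) ∈ {w | ∃ f : V → Fin 3, G.IsTRDF f ∧ w = ∑ v, (f v : ℕ)} := by
  have hne : Nonempty V := Fintype.card_pos_iff.mp (by omega)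
  obtain ⟨v, hv⟩ := G.exists_maximal_degree_vertex
  have hdeg : Fintype.card V - 1 ≤ G.degree v := by omega
  have hNv : G.neighborFinset v = univ.erase v := by
    apply Finset.eq_of_subset_of_card_le
    · intro z hz
      rw [SimpleGraph.mem_neighborFinset] at hz
      exact Finset.mem_erase.mpr ⟨hz.ne', Finset.mem_univ z⟩
    · rw [Finset.card_erase_of_mem (Finset.mem_univ v), Finset.card_univ]
      rw [SimpleGraph.card_neighborFinset_eq_degree]; exact hdeg
  have hadjall : ∀ u, u ≠ v → G.Adj v u := by
    intro u hu
    rw [← SimpleGraph.mem_neighborFinset, hNv]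
    exact Finset.mem_erase.mpr ⟨hu, Finset.mem_univ u⟩
  obtain ⟨w, hw⟩ := hG v
  have hwv : v ≠ w := hw.ne
  refine ⟨fun x => if x = v then 2 else if x = w then 1 else 0, ⟨?_, ?_⟩, ?_⟩
  · intro x hx
    beta_reduce at hx
    have hxv : x ≠ v := by
      rintro rfl
      rw [if_pos rfl] at hx
      exact absurd hx (by decide)
    refine ⟨v, (hadjall x hxv).symm, ?_⟩
    beta_reduce
    rw [if_pos rfl]
  · intro x hx
    by_cases hxv : x = v
    · subst hxv
      refine ⟨w, hw, ?_⟩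
      beta_reduce
      rw [if_neg (Ne.symm hwv), if_pos rfl]
      decide
    · by_cases hxw : x = w
      · subst hxw
        refine ⟨v, hw.symm, ?_⟩
        beta_reduce
        rw [if_pos rfl]
        decide
      · exfalso
        beta_reduce at hx
        rw [if_neg hxv, if_neg hxw] at hx
        exact hx rfl
  · rw [sum_pair_fn v w hwv 2 1]; decide

private lemma pair_mem (u v : V) (huv : G.Adj u v)
    (hcov : ∀ w : V, w ∈ G.neighborSet u ∪ {u} ∪ (G.neighborSet v ∪ {v})) :
    (4 : ℕ) ∈ {w | ∃ f : V → Fin 3, G.IsTRDF f ∧ w = ∑ x, (f x : ℕ)} := by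
  refine ⟨fun x => if x = u then 2 else if x = v then 2 else 0, ⟨?_, ?_⟩, ?_⟩
  · intro x hx
    beta_reduce at hx
    have hxu : x ≠ u := by rintro rfl; rw [if_pos rfl] at hx; exact absurd hx (by decide)
    have hxv : x ≠ v := by rintro rfl; rw [if_neg hxu, if_pos rfl] at hx; exact absurd hx (by decide)
    have hcx := hcov x
    simp only [Set.mem_union, Set.mem_singleton_iff, SimpleGraph.mem_neighborSet] at hcx
    have : G.Adj u x ∨ G.Adj v x := by tauto
    rcases this with h | h
    · refine ⟨u, h.symm, ?_⟩; beta_reduce; rw [if_pos rfl]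
    · refine ⟨v, h.symm, ?_⟩; beta_reduce; rw [if_neg (Ne.symm huv.ne), if_pos rfl]
  · intro x hx
    by_cases hxu : x = u
    · subst hxu
      refine ⟨v, huv, ?_⟩
      beta_reduce
      rw [if_neg (Ne.symm huv.ne), if_pos rfl]
      decide
    · by_cases hxv : x = v
      · subst hxv
        refine ⟨u, huv.symm, ?_⟩
        beta_reduce
        rw [if_pos rfl]
        decide
      · exfalso
        beta_reduce at hx
        rw [if_neg hxu, if_neg hxv] at hx
        exact hx rfl
  · rw [sum_pair_fn u v huv.ne 2 2]; decide

private lemma matching_mem (hG : G.IsolateFree) (h4 : Fintype.card V = 4) :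
    (4 : ℕ) ∈ {w | ∃ f : V → Fin 3, G.IsTRDF f ∧ w = ∑ x, (f x : ℕ)} := by
  refine ⟨fun _ => 1, ⟨?_, ?_⟩, ?_⟩
  · intro x hx; exact absurd hx (show ¬((1:Fin 3) = 0) by decide)
  · intro x _
    obtain ⟨z, hz⟩ := hG x
    exact ⟨z, hz, show (1:Fin 3) ≠ 0 by decide⟩
  · calc (4:ℕ) = Fintype.card V := h4.symm
      _ = ∑ _x : V, 1 := by rw [Finset.sum_const, Finset.card_univ, smul_eq_mul, mul_one]
      _ = _ := Finset.sum_congr rfl fun x _ => rfl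

end helpers2

theorem stmt_7 {V : Type*} [Fintype V] (G : SimpleGraph V) [DecidableRel G.Adj]
    (hG : G.IsolateFree) (hn : 3 ≤ Fintype.card V) :
    G.trdn = 4 ↔
      ((Fintype.card V = 4 ∧ ∀ v, ∃! u, G.Adj v u) ∨
       (G.maxDegree ≤ Fintype.card V - 2 ∧
        ∃ u v, G.Adj u v ∧ ∀ w, w ∈ G.neighborSet u ∪ {u} ∪ (G.neighborSet v ∪ {v}))) := by
  classical
  rw [SimpleGraph.trdn]
  constructor
  · intro h4
    have hΔ : G.maxDegree ≤ Fintype.card V - 2 := by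
      by_contra hc
      have h3 : sInf {w | ∃ f : V → Fin 3, G.IsTRDF f ∧ w = ∑ v, (f v : ℕ)} ≤ 3 :=
        Nat.sInf_le (big_degree_mem hG hn hc)
      rw [h4] at h3
      exact absurd h3 (by norm_num)
    have hmem : (4:ℕ) ∈ {w | ∃ f : V → Fin 3, G.IsTRDF f ∧ w = ∑ v, (f v : ℕ)} :=
      h4 ▸ Nat.sInf_mem (trdnSet_nonempty hG)
    clear h4
    obtain ⟨f, hf, hsum⟩ := hmem
    rw [sum_count] at hsum
    set A := univ.filter fun x => f x = 2 with hA
    set B := univ.filter fun x => f x = 1 with hB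
    have hmemA : ∀ x, x ∈ A ↔ f x = 2 := fun x => by simp [hA]
    have hmemB : ∀ x, x ∈ B ↔ f x = 1 := fun x => by simp [hB]
    rcases Nat.lt_or_ge A.card 1 with h0 | h1
    · -- A empty: all labels 1, card V = 4
      have hA0 : A = ∅ := Finset.card_eq_zero.mp (by omega)
      have hall : ∀ x, f x = 1 := by
        intro x
        rcases fin3_eq (f x) with hx | hx | hx
        · obtain ⟨z, _, hz2⟩ := hf.1 x hx
          exact absurd ((hmemA z).mpr hz2) (by simp [hA0])
        · exact hx
        · exact absurd ((hmemA x).mpr hx) (by simp [hA0])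
      have hBu : B = univ := Finset.eq_univ_iff_forall.mpr fun x => (hmemB x).mpr (hall x)
      have h4c : Fintype.card V = 4 := by
        have : B.card = Fintype.card V := by rw [hBu, Finset.card_univ]
        omega
      by_cases hm : ∀ v : V, ∃! u, G.Adj v u
      · exact Or.inl ⟨h4c, hm⟩
      · right
        refine ⟨hΔ, ?_⟩
        push_neg at hm
        obtain ⟨v, hv⟩ := hm
        obtain ⟨a, ha⟩ := hG v
        obtain ⟨b, hb, hbne⟩ : ∃ b, G.Adj v b ∧ b ≠ a := by
          by_contra hcon
          push_neg at hcon
          exact hv ⟨a, ha, fun y hy => hcon y hy⟩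
        have hNv : ({a, b} : Finset V) = G.neighborFinset v := by
          apply Finset.eq_of_subset_of_card_le
          · intro z hz
            simp only [Finset.mem_insert, Finset.mem_singleton] at hz
            rw [SimpleGraph.mem_neighborFinset]
            rcases hz with rfl | rfl
            · exact ha
            · exact hb
          · rw [Finset.card_pair (Ne.symm hbne), SimpleGraph.card_neighborFinset_eq_degree]
            have := G.degree_le_maxDegree v
            omega
        obtain ⟨c, hc⟩ : ∃ c, c ∉ ({v, a, b} : Finset V) := by
          by_contra hcon
          push_neg at hcon
          have hsub : (univ : Finset V) ⊆ {v, a, b} := fun x _ => hcon x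
          have h3 : ({v, a, b} : Finset V).card ≤ 3 :=
            le_trans (Finset.card_insert_le _ _)
              (by simpa using Nat.add_le_add_right (Finset.card_insert_le a {b}) 1)
          have := Finset.card_le_card hsub
          rw [Finset.card_univ] at this
          omega
        simp only [Finset.mem_insert, Finset.mem_singleton, not_or] at hc
        have hav : a ≠ v := ha.ne'
        have hbv : b ≠ v := hb.ne'
        have hcard4 : ({v, a, b, c} : Finset V).card = 4 := by
          rw [Finset.card_insert_of_notMem (by simp [Ne.symm hav, Ne.symm hbv, Ne.symm hc.1]),
            Finset.card_insert_of_notMem (by simp [hbne.symm, Ne.symm hc.2.1]),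
            Finset.card_insert_of_notMem (by simp [Ne.symm hc.2.2]), Finset.card_singleton]
        have huniv : ∀ w : V, w = v ∨ w = a ∨ w = b ∨ w = c := by
          intro w
          have heq : ({v, a, b, c} : Finset V) = univ :=
            Finset.eq_of_subset_of_card_le (Finset.subset_univ _)
              (by rw [Finset.card_univ, hcard4, h4c])
          have : w ∈ ({v, a, b, c} : Finset V) := heq ▸ Finset.mem_univ w
          simpa using this
        obtain ⟨d, hd⟩ := hG c
        have hdv : d ≠ v := by
          rintro rfl
          have : c ∈ G.neighborFinset d := by
            rw [SimpleGraph.mem_neighborFinset]; exact hd.symm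
          rw [← hNv] at this
          simp only [Finset.mem_insert, Finset.mem_singleton] at this
          rcases this with rfl | rfl
          · exact hc.2.1 rfl
          · exact hc.2.2 rfl
        rcases huniv d with rfl | rfl | rfl | rfl
        · exact absurd rfl hdv
        · -- d = a : use pair (v, a)
          refine ⟨v, d, ha, ?_⟩
          intro w
          simp only [Set.mem_union, Set.mem_singleton_iff, SimpleGraph.mem_neighborSet]
          rcases huniv w with rfl | rfl | rfl | rfl
          · tauto
          · tauto
          · exact Or.inl (Or.inl hb)
          · exact Or.inr (Or.inl hd.symm)
        · -- d = b : use pair (v, b)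
          refine ⟨v, d, hb, ?_⟩
          intro w
          simp only [Set.mem_union, Set.mem_singleton_iff, SimpleGraph.mem_neighborSet]
          rcases huniv w with rfl | rfl | rfl | rfl
          · tauto
          · exact Or.inl (Or.inl ha)
          · tauto
          · exact Or.inr (Or.inl hd.symm)
        · exact absurd hd (G.loopless.irrefl _)
    rcases Nat.lt_or_ge A.card 2 with h2 | h2
    · -- A.card = 1
      have h1' : A.card = 1 := by omega
      obtain ⟨a, hAa⟩ := Finset.card_eq_one.mp h1'
      have hfa : f a = 2 := (hmemA a).mp (by simp [hAa])
      obtain ⟨x, hax, hx0⟩ := hf.2 a (by rw [hfa]; decide)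
      have hxa : x ≠ a := hax.ne'
      have hfx : f x = 1 := by
        rcases fin3_eq (f x) with h | h | h
        · exact absurd h hx0
        · exact h
        · exact absurd (by simpa [hAa] using (hmemA x).mpr h) hxa
      have hxB : x ∈ B := (hmemB x).mpr hfx
      right
      refine ⟨hΔ, a, x, hax, ?_⟩
      intro w
      simp only [Set.mem_union, Set.mem_singleton_iff, SimpleGraph.mem_neighborSet]
      by_cases hwa : w = a
      · tauto
      by_cases hwx : w = x
      · tauto
      rcases fin3_eq (f w) with h | h | h
      · obtain ⟨z, hwz, hz2⟩ := hf.1 w h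
        have hza : z = a := by simpa [hAa] using (hmemA z).mpr hz2
        subst hza
        exact Or.inl (Or.inl hwz.symm)
      · -- f w = 1 : w ∈ B, B = {x, w}
        have hwB : w ∈ B := (hmemB w).mpr h
        have hBeq : ({x, w} : Finset V) = B := by
          apply Finset.eq_of_subset_of_card_le
          · intro z hz
            simp only [Finset.mem_insert, Finset.mem_singleton] at hz
            rcases hz with rfl | rfl
            · exact hxB
            · exact hwB
          · rw [Finset.card_pair (Ne.symm hwx)]
            omega
        obtain ⟨z, hwz, hz0⟩ := hf.2 w (by rw [h]; decide)
        have hzw : z ≠ w := hwz.ne'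
        rcases fin3_eq (f z) with hz | hz | hz
        · exact absurd hz hz0
        · have : z ∈ ({x, w} : Finset V) := hBeq ▸ (hmemB z).mpr hz
          simp only [Finset.mem_insert, Finset.mem_singleton] at this
          rcases this with rfl | rfl
          · exact Or.inr (Or.inl hwz.symm)
          · exact absurd rfl hzw
        · have : z = a := by simpa [hAa] using (hmemA z).mpr hz
          subst this
          exact Or.inl (Or.inl hwz.symm)
      · have : w = a := by simpa [hAa] using (hmemA w).mpr h
        exact absurd this hwa
    · -- A.card = 2
      have h2' : A.card = 2 := by omega
      have hB0 : B = ∅ := Finset.card_eq_zero.mp (by omega)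
      obtain ⟨u, v, huvne, hAuv⟩ := Finset.card_eq_two.mp h2'
      have hfu : f u = 2 := (hmemA u).mp (by simp [hAuv])
      have hfv : f v = 2 := (hmemA v).mp (by simp [hAuv])
      obtain ⟨x, hux, hx0⟩ := hf.2 u (by rw [hfu]; decide)
      have hxu : x ≠ u := hux.ne'
      have hxv : x = v := by
        rcases fin3_eq (f x) with h | h | h
        · exact absurd h hx0
        · exact absurd ((hmemB x).mpr h) (by simp [hB0])
        · have : x ∈ A := (hmemA x).mpr h
          rw [hAuv] at this
          simp only [Finset.mem_insert, Finset.mem_singleton] at this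
          tauto
      subst hxv
      right
      refine ⟨hΔ, u, x, hux, ?_⟩
      intro w
      simp only [Set.mem_union, Set.mem_singleton_iff, SimpleGraph.mem_neighborSet]
      by_cases hwu : w = u
      · tauto
      by_cases hwx : w = x
      · tauto
      rcases fin3_eq (f w) with h | h | h
      · obtain ⟨z, hwz, hz2⟩ := hf.1 w h
        have : z ∈ A := (hmemA z).mpr hz2
        rw [hAuv] at this
        simp only [Finset.mem_insert, Finset.mem_singleton] at this
        rcases this with rfl | rfl
        · exact Or.inl (Or.inl hwz.symm)
        · exact Or.inr (Or.inl hwz.symm)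
      · exact absurd ((hmemB w).mpr h) (by simp [hB0])
      · have : w ∈ A := (hmemA w).mpr h
        rw [hAuv] at this
        simp only [Finset.mem_insert, Finset.mem_singleton] at this
        tauto
  · rintro (⟨h4c, hm⟩ | ⟨hΔ, u, v, huv, hcov⟩)
    · apply le_antisymm
      · exact Nat.sInf_le (matching_mem hG h4c)
      · refine le_csInf (trdnSet_nonempty hG) ?_
        rintro w ⟨f, hf, rfl⟩
        exact matching_lower h4c hm f hf
    · apply le_antisymm
      · exact Nat.sInf_le (pair_mem u v huv hcov)
      · refine le_csInf (trdnSet_nonempty hG) ?_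
        rintro w ⟨f, hf, rfl⟩
        exact pair_lower hn hΔ u v huv hcov f hf
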